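/- Let ((g,[2]),D) be a ResLieDer pair over F and (V,ρ,η) a restricted representation of it. Then for every n ≥ 1 and every alternating F-multilinear map φ : gⁿ → V, δ(dⁿφ) = dⁿ(δφ) as maps gⁿ⁺¹ → V, where (dⁿφ)(z₁,…,z_{n+1}) = Σ_{1≤i≤n+1} ρ(z_i)(φ(z₁,…,ẑ_i,…,z_{n+1})) + Σ_{1≤i<j≤n+1} φ([z_i,z_j],z₁,…,ẑ_i,…,ẑ_j,…,z_{n+1}) and (δφ)(z₁,…,z_n) = η(φ(z₁,…,z_n)) + Σ_{1≤i≤n} φ(z₁,…,D(z_i),…,z_n). -/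

import Mathlib

/-- The differential `dⁿ` on raw `n`-cochains (`n = m+1`), in characteristic 2:
`(dⁿφ)(z₁,…,z_{n+1}) = Σᵢ ρ(zᵢ)(φ(z₁,…,ẑᵢ,…,z_{n+1}))
  + Σ_{i<j} φ([zᵢ,zⱼ],z₁,…,ẑᵢ,…,ẑⱼ,…,z_{n+1})`. -/
def dOp {F : Type*} [Field F] {g : Type*} [LieRing g] [LieAlgebra F g]
    {V : Type*} [AddCommGroup V] [Module F V]
    (ρ : g →ₗ[F] Module.End F V) (m : ℕ)
    (φ : (Fin (m + 1) → g) → V) : (Fin (m + 2) → g) → V := fun z =>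
  (∑ i : Fin (m + 2), ρ (z i) (φ (i.removeNth z))) +
  ∑ i : Fin (m + 2), ∑ j : Fin (m + 2),
    if h : (i : ℕ) < (j : ℕ) then
      φ (Fin.cons ⁅z i, z j⁆
        ((⟨(i : ℕ), by have := j.isLt; omega⟩ : Fin (m + 1)).removeNth (j.removeNth z)))
    else 0

/-- The operator `δ` on raw `n`-cochains:
`(δφ)(z₁,…,zₙ) = η(φ(z₁,…,zₙ)) + Σᵢ φ(z₁,…,D(zᵢ),…,zₙ)`. -/
def deltaOp {F : Type*} [Field F] {g : Type*} [LieRing g] [LieAlgebra F g]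
    {V : Type*} [AddCommGroup V] [Module F V]
    (D : g →ₗ[F] g) (η : Module.End F V) (m : ℕ)
    (φ : (Fin m → g) → V) : (Fin m → g) → V := fun z =>
  η (φ z) + ∑ i : Fin m, φ (Function.update z i (D (z i)))

private lemma removeNth_update_succAbove {α : Type*} {n : ℕ} (p : Fin (n+1)) (k : Fin n)
    (v : α) (f : Fin (n+1) → α) :
    p.removeNth (Function.update f (p.succAbove k) v) = Function.update (p.removeNth f) k v := by
  ext l
  simp [Fin.removeNth, Function.update_apply, Fin.succAbove_right_injective.eq_iff]

/-- for every `n ≥ 1` (here `n = m + 1`) and every alternating multilinear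
map `φ : gⁿ → V`, `δ(dⁿφ) = dⁿ(δφ)`. -/
theorem stmt2
    {F : Type*} [Field F] [CharP F 2]
    {g : Type*} [LieRing g] [LieAlgebra F g]
    {V : Type*} [AddCommGroup V] [Module F V]
    (sq : g → g)
    (hsq_ad : ∀ x y : g, ⁅sq x, y⁆ = ⁅x, ⁅x, y⁆⁆)
    (hsq_smul : ∀ (a : F) (x : g), sq (a • x) = a ^ 2 • sq x)
    (hsq_add : ∀ x y : g, sq (x + y) = sq x + sq y + ⁅x, y⁆)
    (D : g →ₗ[F] g)
    (hD_br : ∀ x y : g, D ⁅x, y⁆ = ⁅D x, y⁆ + ⁅x, D y⁆)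
    (hD_sq : ∀ x : g, D (sq x) = ⁅x, D x⁆)
    (ρ : g →ₗ[F] Module.End F V)
    (hρ_br : ∀ x y : g, ρ ⁅x, y⁆ = ρ x * ρ y - ρ y * ρ x)
    (hρ_sq : ∀ x : g, ρ (sq x) = ρ x * ρ x)
    (η : Module.End F V)
    (hη : ∀ x : g, η * ρ x = ρ (D x) + ρ x * η)
    (m : ℕ) (φ : g [⋀^Fin (m + 1)]→ₗ[F] V) :
    deltaOp D η (m + 2) (dOp ρ m ⇑φ) = dOp ρ m (deltaOp D η (m + 1) ⇑φ) := by
  funext z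
  have h2 : ∀ v : V, v + v = 0 := by
    intro v
    have h0 : (2 : F) = 0 := by exact_mod_cast CharP.cast_eq_zero F 2
    calc v + v = (2 : F) • v := by rw [two_smul]
      _ = 0 := by rw [h0, zero_smul]
  have hη' : ∀ (x : g) (v : V), η (ρ x v) = ρ (D x) v + ρ x (η v) := by
    intro x v
    have := congrArg (fun T : Module.End F V => T v) (hη x)
    simpa using this
  have hcons_add : ∀ (a b : g) (r : Fin m → g),
      φ (Fin.cons (a + b) r) = φ (Fin.cons a r) + φ (Fin.cons b r) := by
    intro a b r
    have := φ.map_update_add (v := Fin.cons (0 : g) r) 0 a b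
    simpa [Fin.update_cons_zero] using this
  -- Part 1 : the ρ-terms
  have key1 :
      η (∑ i : Fin (m+2), ρ (z i) (φ (i.removeNth z))) +
        ∑ k : Fin (m+2), ∑ i : Fin (m+2),
          ρ (Function.update z k (D (z k)) i)
            (φ (i.removeNth (Function.update z k (D (z k)))))
      = ∑ i : Fin (m+2), ρ (z i)
          (η (φ (i.removeNth z)) +
            ∑ l : Fin (m+1),
              φ (Function.update (i.removeNth z) l (D (i.removeNth z l)))) := by
    rw [map_sum, Finset.sum_comm, ← Finset.sum_add_distrib]
    refine Finset.sum_congr rfl fun i _ => ?_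
    rw [hη' (z i) (φ (i.removeNth z))]
    rw [Fin.sum_univ_succAbove
      (fun k => ρ (Function.update z k (D (z k)) i)
        (φ (i.removeNth (Function.update z k (D (z k)))))) i]
    have e1 : ρ (Function.update z i (D (z i)) i)
        (φ (i.removeNth (Function.update z i (D (z i)))))
        = ρ (D (z i)) (φ (i.removeNth z)) := by
      rw [Function.update_self, Fin.removeNth_update]
    have e2 : ∀ k' : Fin (m+1),
        ρ (Function.update z (i.succAbove k') (D (z (i.succAbove k'))) i)
          (φ (i.removeNth (Function.update z (i.succAbove k') (D (z (i.succAbove k'))))))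
        = ρ (z i) (φ (Function.update (i.removeNth z) k' (D (i.removeNth z k')))) := by
      intro k'
      rw [Function.update_of_ne (Fin.ne_succAbove i k'), removeNth_update_succAbove]
      rfl
    rw [e1, Finset.sum_congr rfl fun k' _ => e2 k', map_add, map_sum]
    rw [show ρ (D (z i)) (φ (i.removeNth z)) + ρ (z i) (η (φ (i.removeNth z))) +
        (ρ (D (z i)) (φ (i.removeNth z)) +
          ∑ k' : Fin (m+1), ρ (z i) (φ (Function.update (i.removeNth z) k' (D (i.removeNth z k')))))
        = (ρ (D (z i)) (φ (i.removeNth z)) + ρ (D (z i)) (φ (i.removeNth z))) +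
          (ρ (z i) (η (φ (i.removeNth z))) +
            ∑ k' : Fin (m+1), ρ (z i) (φ (Function.update (i.removeNth z) k' (D (i.removeNth z k')))))
      from by abel]
    rw [h2, zero_add]
  -- Part 2 : the bracket terms, one pair (i,j) at a time
  have part2 : ∀ (i j : Fin (m+2)) (h : (i:ℕ) < (j:ℕ)) (hi : (i:ℕ) < m + 1),
      ∑ k : Fin (m+2),
        φ (Fin.cons ⁅Function.update z k (D (z k)) i, Function.update z k (D (z k)) j⁆
          ((⟨(i:ℕ), hi⟩ : Fin (m+1)).removeNth (j.removeNth (Function.update z k (D (z k))))))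
      = ∑ l : Fin (m+1),
          φ (Function.update
              (Fin.cons ⁅z i, z j⁆ ((⟨(i:ℕ), hi⟩ : Fin (m+1)).removeNth (j.removeNth z))) l
              (D ((Fin.cons ⁅z i, z j⁆
                ((⟨(i:ℕ), hi⟩ : Fin (m+1)).removeNth (j.removeNth z)) : Fin (m+1) → g) l))) := by
    intro i j h hi
    set i' : Fin (m+1) := ⟨(i:ℕ), hi⟩ with hi'
    set r : Fin m → g := i'.removeNth (j.removeNth z) with hr
    have hji' : j.succAbove i' = i := by
      rw [Fin.succAbove_of_castSucc_lt]
      · exact Fin.ext rfl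
      · exact h
    have hij : i ≠ j := Fin.ne_of_val_ne (Nat.ne_of_lt h)
    set f : Fin (m+2) → V := fun k =>
      φ (Fin.cons ⁅Function.update z k (D (z k)) i, Function.update z k (D (z k)) j⁆
        (i'.removeNth (j.removeNth (Function.update z k (D (z k)))))) with hf
    -- the three pieces on the left
    have hfj : f j = φ (Fin.cons ⁅z i, D (z j)⁆ r) := by
      rw [hf]
      simp only [Function.update_self, Function.update_of_ne hij, Fin.removeNth_update]
      rfl
    have hrem : j.removeNth (Function.update z i (D (z i)))
        = Function.update (j.removeNth z) i' (D (z i)) := by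
      rw [← hji', removeNth_update_succAbove]
    have hfi : f i = φ (Fin.cons ⁅D (z i), z j⁆ r) := by
      rw [hf]
      simp only [Function.update_self, Function.update_of_ne hij.symm, hrem,
        Fin.removeNth_update]
      rfl
    have hfk : ∀ l : Fin m, f (j.succAbove (i'.succAbove l))
        = φ (Fin.cons ⁅z i, z j⁆ (Function.update r l (D (r l)))) := by
      intro l
      have hik : i ≠ j.succAbove (i'.succAbove l) := by
        rw [← hji']
        exact Fin.succAbove_right_injective.ne (Fin.ne_succAbove i' l)
      have hjk : j ≠ j.succAbove (i'.succAbove l) := Fin.ne_succAbove j _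
      rw [hf]
      simp only [Function.update_of_ne hik, Function.update_of_ne hjk,
        removeNth_update_succAbove]
      rfl
    rw [show (∑ k : Fin (m+2), f k) = ∑ k : Fin (m+2),
      φ (Fin.cons ⁅Function.update z k (D (z k)) i, Function.update z k (D (z k)) j⁆
        (i'.removeNth (j.removeNth (Function.update z k (D (z k)))))) from rfl] at *
    rw [← hf]  -- keep LHS as ∑ f
    rw [Fin.sum_univ_succAbove f j, Fin.sum_univ_succAbove (fun k' => f (j.succAbove k')) i',
      hji']
    rw [hfj, hfi, Finset.sum_congr rfl fun l _ => hfk l]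
    -- the right-hand side
    rw [Fin.sum_univ_succ (fun l : Fin (m+1) =>
      φ (Function.update (Fin.cons ⁅z i, z j⁆ r) l (D ((Fin.cons ⁅z i, z j⁆ r : Fin (m+1) → g) l))))]
    have hR0 : φ (Function.update (Fin.cons ⁅z i, z j⁆ r) 0
        (D ((Fin.cons ⁅z i, z j⁆ r : Fin (m+1) → g) 0)))
        = φ (Fin.cons ⁅D (z i), z j⁆ r) + φ (Fin.cons ⁅z i, D (z j)⁆ r) := by
      rw [show ((Fin.cons ⁅z i, z j⁆ r : Fin (m+1) → g) 0 : g) = ⁅z i, z j⁆ from rfl,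
        Fin.update_cons_zero, hD_br, hcons_add]
    have hRs : ∀ l : Fin m,
        φ (Function.update (Fin.cons ⁅z i, z j⁆ r) l.succ
          (D ((Fin.cons ⁅z i, z j⁆ r : Fin (m+1) → g) l.succ)))
        = φ (Fin.cons ⁅z i, z j⁆ (Function.update r l (D (r l)))) := by
      intro l
      rw [show ((Fin.cons ⁅z i, z j⁆ r : Fin (m+1) → g) l.succ : g) = r l from rfl, ← Fin.cons_update]
    rw [hR0, Finset.sum_congr rfl fun l _ => hRs l]
    abel
  -- assemble the bracket terms
  have key2 :
      η (∑ i : Fin (m+2), ∑ j : Fin (m+2),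
          if h : (i:ℕ) < (j:ℕ) then
            φ (Fin.cons ⁅z i, z j⁆
              ((⟨(i:ℕ), by have := j.isLt; omega⟩ : Fin (m+1)).removeNth (j.removeNth z)))
          else 0) +
        ∑ k : Fin (m+2), ∑ i : Fin (m+2), ∑ j : Fin (m+2),
          (if h : (i:ℕ) < (j:ℕ) then
            φ (Fin.cons ⁅Function.update z k (D (z k)) i, Function.update z k (D (z k)) j⁆
              ((⟨(i:ℕ), by have := j.isLt; omega⟩ : Fin (m+1)).removeNth
                (j.removeNth (Function.update z k (D (z k))))))
          else 0)
      = ∑ i : Fin (m+2), ∑ j : Fin (m+2),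
          if h : (i:ℕ) < (j:ℕ) then
            η (φ (Fin.cons ⁅z i, z j⁆
              ((⟨(i:ℕ), by have := j.isLt; omega⟩ : Fin (m+1)).removeNth (j.removeNth z)))) +
            ∑ l : Fin (m+1),
              φ (Function.update (Fin.cons ⁅z i, z j⁆
                  ((⟨(i:ℕ), by have := j.isLt; omega⟩ : Fin (m+1)).removeNth (j.removeNth z))) l
                (D ((Fin.cons ⁅z i, z j⁆
                  ((⟨(i:ℕ), by have := j.isLt; omega⟩ : Fin (m+1)).removeNth (j.removeNth z)) : Fin (m+1) → g) l)))
          else 0 := by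
    rw [map_sum, Finset.sum_comm, ← Finset.sum_add_distrib]
    refine Finset.sum_congr rfl fun i _ => ?_
    rw [map_sum, Finset.sum_comm, ← Finset.sum_add_distrib]
    refine Finset.sum_congr rfl fun j _ => ?_
    by_cases h : (i:ℕ) < (j:ℕ)
    · simp only [dif_pos h]
      rw [part2 i j h (by have := j.isLt; omega)]
    · simp only [dif_neg h, map_zero, Finset.sum_const_zero, add_zero]
  simp only [deltaOp, dOp]
  rw [map_add η, Finset.sum_add_distrib, add_add_add_comm, key1, key2]
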